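/- Let $A$ be a C*-algebra and $a, b \in A$ with $\{a,a,b\} = 0$ where $\{x,y,z\} = (xy^*z + zy^*x)/2$, i.e., $aa^*b + ba^*a = 0$. Then $a^*b = 0$ and $ab^* = 0$. -/

import Mathlib

open scoped Polynomial

/-- If `c` commutes with a selfadjoint element `x` of a C*-algebra, it commutes with
`cfcHom hx g` for every `g`. -/
private lemma commute_cfcHom {A : Type*} [CStarAlgebra A] {x c : A}
    (hx : IsSelfAdjoint x) (hc : Commute c x) (g : C(spectrum ℝ x, ℝ)) :
    Commute c (cfcHom hx g) := by
  let φ : C(spectrum ℝ x, ℝ) →⋆ₐ[ℝ] A := cfcHom hx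
  let S : Subalgebra ℝ C(spectrum ℝ x, ℝ) :=
    (Subalgebra.centralizer ℝ {c}).comap (φ : C(spectrum ℝ x, ℝ) →⋆ₐ[ℝ] A).toAlgHom
  have hmem : ∀ g : C(spectrum ℝ x, ℝ), g ∈ S ↔ c * φ g = φ g * c := by
    intro g
    constructor
    · intro hgS
      have := (Subalgebra.mem_comap _ _ _).mp hgS
      rw [Subalgebra.mem_centralizer_iff] at this
      exact this c rfl
    · intro hg
      refine (Subalgebra.mem_comap _ _ _).mpr ?_
      rw [Subalgebra.mem_centralizer_iff]
      intro y hy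
      rw [Set.mem_singleton_iff] at hy
      subst hy
      exact hg
  have hSclosed : IsClosed (S : Set C(spectrum ℝ x, ℝ)) := by
    have h1 : IsClosed {y : A | c * y = y * c} :=
      isClosed_eq (continuous_mul_left c) (continuous_mul_right c)
    have h2 : (S : Set C(spectrum ℝ x, ℝ)) = φ ⁻¹' {y : A | c * y = y * c} := by
      ext g
      simpa [Set.mem_preimage] using hmem g
    rw [h2]
    exact h1.preimage (cfcHom_continuous hx)
  have hXeq : φ ((Polynomial.toContinuousMapOnAlgHom (spectrum ℝ x)) Polynomial.X) = x := by
    have heq : (Polynomial.toContinuousMapOnAlgHom (spectrum ℝ x)) Polynomial.X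
        = (ContinuousMap.id ℝ).restrict (spectrum ℝ x) := by
      ext z; simp
    rw [heq]
    exact cfcHom_id hx
  have hXmem : (Polynomial.toContinuousMapOnAlgHom (spectrum ℝ x)) Polynomial.X ∈ S := by
    rw [hmem, hXeq]
    exact hc
  have hpoly : polynomialFunctions (spectrum ℝ x) ≤ S := by
    rw [polynomialFunctions.eq_adjoin_X]
    exact Algebra.adjoin_le (by simpa using hXmem)
  have htop : (⊤ : Subalgebra ℝ C(spectrum ℝ x, ℝ)) ≤ S := by
    rw [← polynomialFunctions.topologicalClosure (spectrum ℝ x)]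
    exact Subalgebra.topologicalClosure_minimal hpoly hSclosed
  exact (hmem g).mp (htop (by trivial))

/-- If `c` commutes with a selfadjoint element `x` of a C*-algebra, it commutes with
`cfc f x` for every `f : ℝ → ℝ`. -/
private lemma commute_cfc' {A : Type*} [CStarAlgebra A] {x c : A}
    (hc : Commute c x) (f : ℝ → ℝ) :
    Commute c (cfc f x) := by
  refine cfc_cases (fun y ↦ Commute c y) x f (Commute.zero_right c) fun hf hx' ↦ ?_
  exact commute_cfcHom hx' hc _

/-- If `c` commutes with the square of a nonnegative element `q`, then it commutes with `q`. -/
private lemma commute_of_commute_sq {A : Type*} [CStarAlgebra A] [PartialOrder A]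
    [StarOrderedRing A] {q c : A}
    (hq : 0 ≤ q) (hc : Commute c (q ^ 2)) : Commute c q := by
  have hqsa : IsSelfAdjoint q := IsSelfAdjoint.of_nonneg hq
  have hq2 : (0 : A) ≤ q ^ 2 := by
    rw [sq]
    nth_rw 1 [← hqsa]
    exact star_mul_self_nonneg q
  -- `q = cfc Real.sqrt (q ^ 2)`
  have key : cfc Real.sqrt (q ^ 2) = q := by
    have hr_nonneg : (0 : A) ≤ cfc Real.sqrt (q ^ 2) :=
      cfc_nonneg fun t _ ↦ Real.sqrt_nonneg t
    have hr_sq : cfc Real.sqrt (q ^ 2) * cfc Real.sqrt (q ^ 2) = q ^ 2 := by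
      rw [← cfc_mul Real.sqrt Real.sqrt (q ^ 2)
        (Real.continuous_sqrt.continuousOn) (Real.continuous_sqrt.continuousOn)]
      have hcongr : ∀ t ∈ spectrum ℝ (q ^ 2), Real.sqrt t * Real.sqrt t = id t := by
        intro t ht
        exact Real.mul_self_sqrt (spectrum_nonneg_of_nonneg hq2 ht)
      rw [cfc_congr hcongr, cfc_id ℝ (q ^ 2)]
    have h1 : CFC.sqrt (q ^ 2) = cfc Real.sqrt (q ^ 2) := CFC.sqrt_unique hr_sq
    have h2 : CFC.sqrt (q ^ 2) = q := CFC.sqrt_sq q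
    rw [← h1, h2]
  rw [← key]
  exact commute_cfc' hc Real.sqrt

/-- Key step: if `(a* a) c + c (a* a) = 0` then `a c = 0`. -/
private lemma mul_eq_zero_of_anticommute {A : Type*} [CStarAlgebra A] (a c : A)
    (h1 : star a * a * c + c * (star a * a) = 0) : a * c = 0 := by
  letI := CStarAlgebra.spectralOrder A
  letI := CStarAlgebra.spectralOrderedRing A
  have hq : (0 : A) ≤ star a * a := star_mul_self_nonneg a
  have h1' : c * (star a * a) = -(star a * a * c) := eq_neg_of_add_eq_zero_right h1
  have h2 : Commute c ((star a * a) ^ 2) := by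
    show c * (star a * a) ^ 2 = (star a * a) ^ 2 * c
    calc c * (star a * a) ^ 2 = (c * (star a * a)) * (star a * a) := by
          rw [sq]; noncomm_ring
      _ = -(star a * a * c) * (star a * a) := by rw [h1']
      _ = -(star a * a * (c * (star a * a))) := by rw [neg_mul, mul_assoc]
      _ = -(star a * a * -(star a * a * c)) := by rw [← h1']
      _ = star a * a * (star a * a * c) := by rw [mul_neg, neg_neg]
      _ = (star a * a) ^ 2 * c := by rw [sq]; noncomm_ring
  have h3 : Commute c (star a * a) := commute_of_commute_sq hq h2
  have h4 : star a * a * c = 0 := by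
    rw [h3.eq] at h1
    rw [← two_smul ℝ] at h1
    rcases smul_eq_zero.mp h1 with h | h
    · norm_num at h
    · exact h
  have h5 : star (a * c) * (a * c) = 0 := by
    have e : star (a * c) * (a * c) = star c * (star a * a * c) := by
      rw [star_mul]
      noncomm_ring
    rw [e, h4, mul_zero]
  exact (CStarRing.star_mul_self_eq_zero_iff _).mp h5

/-- If `a`, `b` are elements of a C*-algebra with `{a,a,b} = 0`, i.e.
`a a* b + b a* a = 0`, then `a* b = 0` and `a b* = 0`. -/
theorem orthogonal_of_jordan_triple_zero {A : Type*} [CStarAlgebra A] (a b : A)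
    (h : a * star a * b + b * (star a * a) = 0) :
    star a * b = 0 ∧ a * star b = 0 := by
  have h1 : star a * a * (star a * b) + (star a * b) * (star a * a) = 0 := by
    have h' : star a * (a * star a * b + b * (star a * a)) = 0 := by rw [h, mul_zero]
    calc star a * a * (star a * b) + (star a * b) * (star a * a)
        = star a * (a * star a * b + b * (star a * a)) := by noncomm_ring
      _ = 0 := h'
  have h6 : a * (star a * b) = 0 := mul_eq_zero_of_anticommute a (star a * b) h1
  have hab : a * star a * b = 0 := by rw [mul_assoc]; exact h6
  have h7 : b * (star a * a) = 0 := by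
    have := h
    rw [hab, zero_add] at this
    exact this
  constructor
  · have h8 : star (star a * b) * (star a * b) = 0 := by
      have e : star (star a * b) * (star a * b) = star b * (a * (star a * b)) := by
        rw [star_mul, star_star]
        noncomm_ring
      rw [e, h6, mul_zero]
    exact (CStarRing.star_mul_self_eq_zero_iff _).mp h8
  · have h9 : star (a * star b) * (a * star b) = 0 := by
      have e : star (a * star b) * (a * star b) = b * (star a * a) * star b := by
        rw [star_mul, star_star]
        noncomm_ring
      rw [e, h7, zero_mul]
    exact (CStarRing.star_mul_self_eq_zero_iff _).mp h9
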